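/- (Von Neumann's trace inequality) For real m×n matrices A and B with singular values σ_1(A) ≥ … ≥ σ_r(A) and σ_1(B) ≥ … ≥ σ_r(B), where r = min(m,n), one has trace(AᵀB) ≤ Σ_{i=1}^r σ_i(A)σ_i(B). -/

import Mathlib

open Matrix

/-- The singular values of a real `m × n` matrix `X`: the square roots of the
eigenvalues of `XᵀX` (for real matrices `Xᴴ = Xᵀ`). -/
noncomputable def svals {m n : ℕ} (X : Matrix (Fin m) (Fin n) ℝ) : Fin n → ℝ :=
  fun i => Real.sqrt (((by simpa using Matrix.isHermitian_conjTranspose_mul_self X :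
    (Xᵀ * X).IsHermitian)).eigenvalues i)

/-- The singular values arranged in nonincreasing order. -/
noncomputable def svalsSorted {m n : ℕ} (X : Matrix (Fin m) (Fin n) ℝ) : Fin n → ℝ :=
  fun i => svals X (Tuple.sort (fun j => -svals X j) i)

section Helpers

/-- eigenvalues of equal matrices agree. -/
lemma eig_congr {k : ℕ} {M₁ M₂ : Matrix (Fin k) (Fin k) ℝ} (h₁ : M₁.IsHermitian)
    (h₂ : M₂.IsHermitian) (h : M₁ = M₂) : h₁.eigenvalues = h₂.eigenvalues := by
  subst h; rfl

lemma multiset_map_univ_equiv {α β γ : Type*} [Fintype α] [Fintype β] (e : α ≃ β) (f : β → γ) :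
    Multiset.map (f ∘ e) Finset.univ.val = Multiset.map f Finset.univ.val := by
  have h1 : (Finset.univ.map e.toEmbedding).val = Finset.univ.val :=
    congrArg Finset.val (Finset.map_univ_equiv e)
  conv_rhs => rw [← h1]
  rw [Finset.map_val, Multiset.map_map]
  rfl

lemma multiset_ofFn {N : ℕ} {γ : Type*} (f : Fin N → γ) :
    (↑(List.ofFn f) : Multiset γ) = Multiset.map f Finset.univ.val := by
  have : (Finset.univ : Finset (Fin N)).val = ↑(List.finRange N) := by
    rw [Fin.univ_def]
  rw [this, Multiset.map_coe, Multiset.coe_eq_coe, List.ofFn_eq_map]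

lemma antitone_unique {N : ℕ} {u v : Fin N → ℝ} (hu : Antitone u) (hv : Antitone v)
    (h : Multiset.map u Finset.univ.val = Multiset.map v Finset.univ.val) : u = v := by
  have hl : (List.ofFn u).Perm (List.ofFn v) := by
    rw [← Multiset.coe_eq_coe, multiset_ofFn, multiset_ofFn, h]
  have su : (List.ofFn u).Pairwise (· ≥ ·) := List.pairwise_ofFn.mpr (fun i j hij => hu hij.le)
  have sv : (List.ofFn v).Pairwise (· ≥ ·) := List.pairwise_ofFn.mpr (fun i j hij => hv hij.le)
  exact List.ofFn_inj.mp (List.Perm.eq_of_pairwise' su sv hl)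

lemma sort_antitone {N : ℕ} (f : Fin N → ℝ) :
    Antitone (f ∘ Tuple.sort (fun i => -f i)) := by
  have h := Tuple.monotone_sort (fun i => -f i)
  intro i j hij
  have := h hij
  simp only [Function.comp_apply] at this ⊢
  linarith

end Helpers

section DS

open Finset

lemma ds_bound {N : ℕ} {a b : Fin N → ℝ} (ha : Antitone a) (hb : Antitone b)
    {Q : Matrix (Fin N) (Fin N) ℝ} (hQ : Q ∈ doublyStochastic ℝ (Fin N)) :
    ∑ i, ∑ j, a i * b j * Q i j ≤ ∑ i, a i * b i := by
  obtain ⟨w, hw0, hw1, hw⟩ := exists_eq_sum_perm_of_mem_doublyStochastic hQ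
  have hmono : Monovary a b := by
    intro i j hbij
    exact ha (le_of_not_ge fun hle => hbij.not_ge (hb hle))
  have expand : ∑ i, ∑ j, a i * b j * Q i j
      = ∑ σ : Equiv.Perm (Fin N), w σ * ∑ i, a i * b (σ i) := by
    rw [← hw]
    simp only [Matrix.sum_apply, Matrix.smul_apply, smul_eq_mul, Finset.mul_sum]
    conv_lhs => enter [2]; ext i; rw [Finset.sum_comm]
    rw [Finset.sum_comm]
    refine Finset.sum_congr rfl fun σ _ => Finset.sum_congr rfl fun i _ => ?_
    simp only [Equiv.Perm.permMatrix, PEquiv.toMatrix_apply, Equiv.toPEquiv_apply,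
      Option.mem_def, Option.some.injEq, mul_ite, mul_one, mul_zero]
    rw [Finset.sum_ite_eq]
    simp [mul_comm, mul_left_comm]
  rw [expand]
  calc ∑ σ : Equiv.Perm (Fin N), w σ * ∑ i, a i * b (σ i)
      ≤ ∑ σ : Equiv.Perm (Fin N), w σ * ∑ i, a i * b i := by
        refine Finset.sum_le_sum fun σ _ => ?_
        exact mul_le_mul_of_nonneg_left (hmono.sum_mul_comp_perm_le_sum_mul) (hw0 σ)
    _ = ∑ i, a i * b i := by rw [← Finset.sum_mul, hw1, one_mul]

end DS

section Sym

lemma coe_ofReal_eig {N : ℕ} {X : Matrix (Fin N) (Fin N) ℝ} (hX : X.IsHermitian) :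
    (RCLike.ofReal ∘ hX.eigenvalues : Fin N → ℝ) = hX.eigenvalues := by
  funext i; simp

lemma symVN {N : ℕ} {X Y : Matrix (Fin N) (Fin N) ℝ} (hX : X.IsHermitian) (hY : Y.IsHermitian)
    (π ρ : Equiv.Perm (Fin N)) (ha : Antitone (hX.eigenvalues ∘ π))
    (hb : Antitone (hY.eigenvalues ∘ ρ)) :
    (X * Y).trace ≤ ∑ i, hX.eigenvalues (π i) * hY.eigenvalues (ρ i) := by
  set μ := hX.eigenvalues with hμ
  set ν := hY.eigenvalues with hν
  set U : Matrix (Fin N) (Fin N) ℝ := (hX.eigenvectorUnitary : Matrix (Fin N) (Fin N) ℝ) with hU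
  set W : Matrix (Fin N) (Fin N) ℝ := (hY.eigenvectorUnitary : Matrix (Fin N) (Fin N) ℝ) with hW
  set M₀ : Matrix.unitaryGroup (Fin N) ℝ := star hX.eigenvectorUnitary * hY.eigenvectorUnitary
    with hM₀
  set M : Matrix (Fin N) (Fin N) ℝ := (M₀ : Matrix (Fin N) (Fin N) ℝ) with hM
  have hMcoe : M = star U * W := rfl
  have hMM : M * star M = 1 := Matrix.mem_unitaryGroup_iff.mp M₀.2
  have hMM' : star M * M = 1 := Matrix.mem_unitaryGroup_iff'.mp M₀.2
  have hspecX : X = U * Matrix.diagonal μ * star U := by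
    conv_lhs => rw [hX.spectral_theorem]
    rw [coe_ofReal_eig]
    rw [Unitary.conjStarAlgAut_apply]
  have hspecY : Y = W * Matrix.diagonal ν * star W := by
    conv_lhs => rw [hY.spectral_theorem]
    rw [coe_ofReal_eig]
    rw [Unitary.conjStarAlgAut_apply]
  have h1 : (X * Y).trace = (Matrix.diagonal μ * (M * (Matrix.diagonal ν * star M))).trace := by
    rw [hspecX, hspecY]
    simp only [Matrix.mul_assoc]
    rw [Matrix.trace_mul_comm]
    simp only [hMcoe, StarMul.star_mul, star_star, Matrix.mul_assoc]
  have h2 : (X * Y).trace = ∑ i, ∑ j, μ i * ν j * (M i j) ^ 2 := by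
    rw [h1]
    rw [Matrix.trace]
    refine Finset.sum_congr rfl fun i _ => ?_
    rw [Matrix.diag_apply, Matrix.diagonal_mul, Matrix.mul_apply, Finset.mul_sum]
    refine Finset.sum_congr rfl fun j _ => ?_
    rw [Matrix.diagonal_mul, Matrix.star_apply, star_trivial]
    ring
  have hrow : ∀ i, ∑ j, (M i j) ^ 2 = 1 := by
    intro i
    have h := congrFun (congrFun hMM i) i
    rw [Matrix.mul_apply] at h
    simp only [Matrix.star_apply, star_trivial, Matrix.one_apply_eq] at h
    rw [← h]
    exact Finset.sum_congr rfl fun j _ => by ring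
  have hcol : ∀ j, ∑ i, (M i j) ^ 2 = 1 := by
    intro j
    have h := congrFun (congrFun hMM' j) j
    rw [Matrix.mul_apply] at h
    simp only [Matrix.star_apply, star_trivial, Matrix.one_apply_eq] at h
    rw [← h]
    exact Finset.sum_congr rfl fun i _ => by ring
  have hQds : (Matrix.of fun i j => (M (π i) (ρ j)) ^ 2) ∈ doublyStochastic ℝ (Fin N) := by
    rw [mem_doublyStochastic_iff_sum]
    refine ⟨fun i j => sq_nonneg _, fun i => ?_, fun j => ?_⟩
    · simp only [Matrix.of_apply]
      rw [Equiv.sum_comp ρ (fun j => (M (π i) j) ^ 2)]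
      exact hrow (π i)
    · simp only [Matrix.of_apply]
      rw [Equiv.sum_comp π (fun i => (M i (ρ j)) ^ 2)]
      exact hcol (ρ j)
  have h3 : ∑ i, ∑ j, μ i * ν j * (M i j) ^ 2
      = ∑ i, ∑ j, μ (π i) * ν (ρ j) * (M (π i) (ρ j)) ^ 2 := by
    rw [Equiv.sum_comp π (fun i => ∑ j, μ i * ν (ρ j) * (M i (ρ j)) ^ 2)]
    exact Finset.sum_congr rfl fun i _ =>
      (Equiv.sum_comp ρ (fun j => μ i * ν j * (M i j) ^ 2)).symm
  rw [h2, h3]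
  exact ds_bound ha hb hQds

lemma det_resolvent {k : ℕ} {M : Matrix (Fin k) (Fin k) ℝ} (hM : M.IsHermitian) (x : ℝ) :
    (x • (1 : Matrix (Fin k) (Fin k) ℝ) - M).det = ∏ i, (x - hM.eigenvalues i) := by
  set U : Matrix (Fin k) (Fin k) ℝ := (hM.eigenvectorUnitary : Matrix (Fin k) (Fin k) ℝ) with hU
  have hUU : U * star U = 1 := Matrix.mem_unitaryGroup_iff.mp hM.eigenvectorUnitary.2
  have hdiag : x • (1 : Matrix (Fin k) (Fin k) ℝ) - M
      = U * Matrix.diagonal (fun i => x - hM.eigenvalues i) * star U := by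
    conv_lhs => rw [hM.spectral_theorem]
    rw [coe_ofReal_eig]
    rw [Unitary.conjStarAlgAut_apply]
    have h1 : x • (1 : Matrix (Fin k) (Fin k) ℝ) = U * (x • (1 : Matrix (Fin k) (Fin k) ℝ)) * star U := by
      rw [mul_smul_comm, smul_mul_assoc, Matrix.mul_one, hUU]
    rw [h1, ← Matrix.sub_mul, ← Matrix.mul_sub]
    congr 1
    congr 1
    have hx1 : x • (1 : Matrix (Fin k) (Fin k) ℝ) = Matrix.diagonal (fun _ => x) := by
      ext i j
      by_cases h : i = j <;>
        simp [h, Matrix.one_apply, Matrix.diagonal_apply, Matrix.smul_apply]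
    rw [hx1, Matrix.diagonal_sub]
  rw [hdiag, Matrix.det_mul, Matrix.det_mul, Matrix.det_diagonal]
  have : U.det * (star U).det = 1 := by
    rw [← Matrix.det_mul, hUU, Matrix.det_one]
  calc U.det * (∏ i, (x - hM.eigenvalues i)) * (star U).det
      = (U.det * (star U).det) * ∏ i, (x - hM.eigenvalues i) := by ring
    _ = ∏ i, (x - hM.eigenvalues i) := by rw [this, one_mul]

end Sym

section Gfun

/-- The candidate sorted eigenvalue tuple of the dilation matrix. -/
noncomputable def gfun (m n : ℕ) (s : Fin n → ℝ) : Fin (m + n) → ℝ :=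
  fun i => if h1 : (i : ℕ) < n then s ⟨i, h1⟩
    else if h2 : (i : ℕ) < m then 0
    else -s ⟨m + n - 1 - (i : ℕ), by have := i.isLt; omega⟩

/-- An explicit equiv decomposing `Fin (m+n)` into three blocks (when `n ≤ m`). -/
def Eequiv (m n : ℕ) (hnm : n ≤ m) : (Fin n ⊕ (Fin (m - n) ⊕ Fin n)) ≃ Fin (m + n) :=
  (Equiv.sumCongr (Equiv.refl _) finSumFinEquiv).trans
    ((finSumFinEquiv (m := n)).trans (finCongr (by omega)))

lemma Eequiv_val_inl (m n : ℕ) (hnm : n ≤ m) (i : Fin n) :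
    ((Eequiv m n hnm (Sum.inl i) : Fin (m + n)) : ℕ) = (i : ℕ) := by
  simp [Eequiv]

lemma Eequiv_val_inr_inl (m n : ℕ) (hnm : n ≤ m) (j : Fin (m - n)) :
    ((Eequiv m n hnm (Sum.inr (Sum.inl j)) : Fin (m + n)) : ℕ) = n + (j : ℕ) := by
  simp [Eequiv]

lemma Eequiv_val_inr_inr (m n : ℕ) (hnm : n ≤ m) (k : Fin n) :
    ((Eequiv m n hnm (Sum.inr (Sum.inr k)) : Fin (m + n)) : ℕ) = m + (k : ℕ) := by
  simp [Eequiv]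
  omega

lemma map_univ_disjSum {α β γ : Type*} [Fintype α] [Fintype β] (f : α → γ) (g : β → γ) :
    Multiset.map (Sum.elim f g) (Finset.univ : Finset (α ⊕ β)).val
      = Multiset.map f Finset.univ.val + Multiset.map g Finset.univ.val := by
  rw [← Finset.univ_disjSum_univ, Finset.val_disjSum, Multiset.disjSum,
    Multiset.map_add, Multiset.map_map, Multiset.map_map]
  rfl

lemma gfun_comp (m n : ℕ) (hnm : n ≤ m) (s : Fin n → ℝ) :
    gfun m n s ∘ (Eequiv m n hnm)
      = Sum.elim s (Sum.elim (fun _ => 0) (fun k => -s (Fin.rev k))) := by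
  funext z
  rcases z with i | j | k
  · have hv := Eequiv_val_inl m n hnm i
    simp only [Function.comp_apply, Sum.elim_inl, gfun]
    rw [dif_pos (by rw [hv]; exact i.isLt)]
    exact congrArg s (Fin.ext hv)
  · have hv := Eequiv_val_inr_inl m n hnm j
    have hj := j.isLt
    simp only [Function.comp_apply, Sum.elim_inr, Sum.elim_inl, gfun]
    rw [dif_neg (by omega), dif_pos (by omega)]
  · have hv := Eequiv_val_inr_inr m n hnm k
    have hk := k.isLt
    simp only [Function.comp_apply, Sum.elim_inr, gfun]
    rw [dif_neg (by omega), dif_neg (by omega)]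
    refine congrArg (fun y => -s y) (Fin.ext ?_)
    show m + n - 1 - ((Eequiv m n hnm (Sum.inr (Sum.inr k))) : ℕ) = (Fin.rev k : ℕ)
    rw [Fin.val_rev]
    omega

lemma gfun_multiset (m n : ℕ) (hnm : n ≤ m) (s : Fin n → ℝ) :
    Multiset.map (gfun m n s) Finset.univ.val
      = Multiset.map s Finset.univ.val
        + (Multiset.replicate (m - n) (0 : ℝ)
          + Multiset.map (fun i => -s i) Finset.univ.val) := by
  rw [← multiset_map_univ_equiv (Eequiv m n hnm) (gfun m n s), gfun_comp m n hnm s]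
  rw [map_univ_disjSum, map_univ_disjSum]
  congr 1
  congr 1
  · rw [Multiset.map_const']
    simp
  · have h2 : (fun k : Fin n => -s (Fin.rev k))
        = (fun i => -s i) ∘ (Fin.revPerm : Equiv.Perm (Fin n)) := rfl
    rw [h2, multiset_map_univ_equiv]

lemma gfun_antitone (m n : ℕ) (hnm : n ≤ m) {s : Fin n → ℝ} (hs : Antitone s)
    (h0 : ∀ i, 0 ≤ s i) : Antitone (gfun m n s) := by
  intro i j hij
  have hij' : (i : ℕ) ≤ (j : ℕ) := hij
  have hi := i.isLt
  have hj := j.isLt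
  simp only [gfun]
  by_cases h1i : (i : ℕ) < n
  · rw [dif_pos h1i]
    by_cases h1j : (j : ℕ) < n
    · rw [dif_pos h1j]
      exact hs (by exact hij')
    · rw [dif_neg h1j]
      by_cases h2j : (j : ℕ) < m
      · rw [dif_pos h2j]; exact h0 _
      · rw [dif_neg h2j]
        exact le_trans (neg_nonpos.mpr (h0 _)) (h0 _)
  · rw [dif_neg h1i]
    have h1j : ¬ (j : ℕ) < n := by omega
    rw [dif_neg h1j]
    by_cases h2i : (i : ℕ) < m
    · rw [dif_pos h2i]
      by_cases h2j : (j : ℕ) < m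
      · rw [dif_pos h2j]
      · rw [dif_neg h2j]
        exact neg_nonpos.mpr (h0 _)
    · have h2j : ¬ (j : ℕ) < m := by omega
      rw [dif_neg h2i, dif_neg h2j]
      rw [neg_le_neg_iff]
      exact hs (by simp only [Fin.mk_le_mk]; omega)

lemma gfun_sum (m n : ℕ) (hnm : n ≤ m) (s t : Fin n → ℝ) :
    ∑ i, gfun m n s i * gfun m n t i = 2 * ∑ i, s i * t i := by
  rw [← Equiv.sum_comp (Eequiv m n hnm) (fun i => gfun m n s i * gfun m n t i)]
  have hs := gfun_comp m n hnm s
  have ht := gfun_comp m n hnm t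
  calc ∑ z, gfun m n s (Eequiv m n hnm z) * gfun m n t (Eequiv m n hnm z)
      = ∑ z, (Sum.elim s (Sum.elim (fun _ => 0) (fun k => -s (Fin.rev k))) z)
          * (Sum.elim t (Sum.elim (fun _ => 0) (fun k => -t (Fin.rev k))) z) := by
        refine Finset.sum_congr rfl fun z _ => ?_
        rw [← congrFun hs z, ← congrFun ht z]
        rfl
    _ = 2 * ∑ i, s i * t i := by
        rw [Fintype.sum_sum_type, Fintype.sum_sum_type]
        simp only [Sum.elim_inl, Sum.elim_inr, mul_zero, zero_mul, neg_mul_neg,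
          Finset.sum_const_zero, zero_add]
        have h4 := Equiv.sum_comp (Fin.revPerm : Equiv.Perm (Fin n)) (fun k => s k * t k)
        simp only [Fin.revPerm_apply] at h4
        rw [h4]
        ring

end Gfun

section Dilation

open Polynomial

lemma real_conjT {α β : Type*} (X : Matrix α β ℝ) : Xᴴ = Xᵀ := by
  ext i j
  simp [Matrix.conjTranspose_apply]

lemma dilation_isHermitian {m n : ℕ} (A : Matrix (Fin m) (Fin n) ℝ) :
    (Matrix.reindex finSumFinEquiv finSumFinEquiv
      (Matrix.fromBlocks 0 A Aᵀ 0)).IsHermitian := by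
  have h : (Matrix.fromBlocks (0 : Matrix (Fin m) (Fin m) ℝ) A Aᵀ 0).IsHermitian := by
    unfold Matrix.IsHermitian
    rw [real_conjT, Matrix.fromBlocks_transpose]
    simp
  unfold Matrix.IsHermitian
  rw [Matrix.reindex_apply, Matrix.conjTranspose_submatrix, h]

lemma det_dilation {m n : ℕ} (hnm : n ≤ m) (A : Matrix (Fin m) (Fin n) ℝ)
    {x : ℝ} (hx : x ≠ 0) :
    (x • (1 : Matrix (Fin (m+n)) (Fin (m+n)) ℝ)
        - Matrix.reindex finSumFinEquiv finSumFinEquiv (Matrix.fromBlocks 0 A Aᵀ 0)).det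
      = x ^ (m - n) * ((x ^ 2) • (1 : Matrix (Fin n) (Fin n) ℝ) - Aᴴ * A).det := by
  have key : x • (1 : Matrix (Fin (m+n)) (Fin (m+n)) ℝ)
      - Matrix.reindex finSumFinEquiv finSumFinEquiv (Matrix.fromBlocks 0 A Aᵀ 0)
      = Matrix.reindex finSumFinEquiv finSumFinEquiv
          (x • (1 : Matrix (Fin m ⊕ Fin n) (Fin m ⊕ Fin n) ℝ) - Matrix.fromBlocks 0 A Aᵀ 0) := by
    ext i j
    simp only [Matrix.reindex_apply, Matrix.submatrix_apply, Matrix.sub_apply,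
      Matrix.smul_apply, Matrix.one_apply, smul_eq_mul]
    congr 2
    simp [EmbeddingLike.apply_eq_iff_eq]
  rw [key, Matrix.reindex_apply, Matrix.det_submatrix_equiv_self]
  have hblocks : x • (1 : Matrix (Fin m ⊕ Fin n) (Fin m ⊕ Fin n) ℝ)
      - Matrix.fromBlocks 0 A Aᵀ 0
      = Matrix.fromBlocks (x • 1) (-A) (-Aᵀ) (x • 1) := by
    rw [← Matrix.fromBlocks_one]
    ext (i | i) (j | j) <;>
      simp [Matrix.fromBlocks, Matrix.smul_apply, Matrix.one_apply]
  rw [hblocks]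
  letI : Invertible (x • (1 : Matrix (Fin m) (Fin m) ℝ)) := by
    refine ⟨x⁻¹ • (1 : Matrix (Fin m) (Fin m) ℝ), ?_, ?_⟩
    · rw [smul_mul_assoc, one_mul, smul_smul, inv_mul_cancel₀ hx, one_smul]
    · rw [smul_mul_assoc, one_mul, smul_smul, mul_inv_cancel₀ hx, one_smul]
  rw [Matrix.det_fromBlocks₁₁]
  have hinv : ⅟(x • (1 : Matrix (Fin m) (Fin m) ℝ)) = x⁻¹ • (1 : Matrix (Fin m) (Fin m) ℝ) := rfl
  rw [hinv]
  have hschur : x • (1 : Matrix (Fin n) (Fin n) ℝ)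
      - (-Aᵀ) * (x⁻¹ • (1 : Matrix (Fin m) (Fin m) ℝ)) * (-A)
      = x⁻¹ • ((x ^ 2) • (1 : Matrix (Fin n) (Fin n) ℝ) - Aᵀ * A) := by
    have h1 : (-Aᵀ) * (x⁻¹ • (1 : Matrix (Fin m) (Fin m) ℝ)) * (-A) = x⁻¹ • (Aᵀ * A) := by
      simp only [Matrix.neg_mul, Matrix.mul_neg, neg_neg, Matrix.mul_smul, Matrix.smul_mul,
        Matrix.mul_one, smul_neg]
    have h2 : x⁻¹ * x ^ 2 = x := by field_simp
    rw [h1, smul_sub, smul_smul, h2]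
  rw [hschur, Matrix.det_smul, Matrix.det_smul, Matrix.det_one, mul_one, real_conjT]
  simp only [Fintype.card_fin]
  have hxm : x ^ m = x ^ (m - n) * x ^ n := by
    rw [← pow_add]
    congr 1
    omega
  rw [hxm]
  rw [inv_pow]
  field_simp

lemma eig_dilation {m n : ℕ} (hnm : n ≤ m) (A : Matrix (Fin m) (Fin n) ℝ) :
    Multiset.map (dilation_isHermitian A).eigenvalues Finset.univ.val
      = Multiset.map (svals A) Finset.univ.val
        + (Multiset.replicate (m - n) (0 : ℝ)
          + Multiset.map (fun i => -svals A i) Finset.univ.val) := by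
  set L : Multiset ℝ := Multiset.map (dilation_isHermitian A).eigenvalues Finset.univ.val with hL
  set R : Multiset ℝ := Multiset.map (svals A) Finset.univ.val
    + (Multiset.replicate (m - n) (0 : ℝ)
      + Multiset.map (fun i => -svals A i) Finset.univ.val) with hR
  suffices h : (L.map (fun a => X - Polynomial.C a)).prod
      = (R.map (fun a => X - Polynomial.C a)).prod by
    have h2 := congrArg Polynomial.roots h
    rwa [roots_multiset_prod_X_sub_C, roots_multiset_prod_X_sub_C] at h2
  apply Polynomial.eq_of_infinite_eval_eq
  apply Set.Infinite.mono (s := {x : ℝ | x ≠ 0})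
  · intro x hx
    have hx' : x ≠ 0 := hx
    simp only [Set.mem_setOf_eq]
    -- evaluate both sides
    have heval : ∀ (T : Multiset ℝ),
        Polynomial.eval x ((T.map (fun a => X - Polynomial.C a)).prod)
          = (T.map (fun a => x - a)).prod := by
      intro T
      rw [Polynomial.eval_multiset_prod, Multiset.map_map]
      congr 1
      apply Multiset.map_congr rfl
      intro a _
      simp
    rw [heval, heval]
    -- LHS
    have hLval : ((L.map (fun a => x - a)).prod)
        = (x • (1 : Matrix (Fin (m+n)) (Fin (m+n)) ℝ)
          - Matrix.reindex finSumFinEquiv finSumFinEquiv (Matrix.fromBlocks 0 A Aᵀ 0)).det := by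
      rw [det_resolvent (dilation_isHermitian A) x, hL, Multiset.map_map,
        ← Finset.prod_eq_multiset_prod]
      rfl
    -- RHS
    have hAA := Matrix.isHermitian_conjTranspose_mul_self A
    have hfact : ∀ i, (x - svals A i) * (x + svals A i) = x ^ 2 - hAA.eigenvalues i := by
      intro i
      have h0 := Matrix.eigenvalues_conjTranspose_mul_self_nonneg A i
      have hsq : svals A i ^ 2 = hAA.eigenvalues i := Real.sq_sqrt h0
      rw [← hsq]
      ring
    have hRval : ((R.map (fun a => x - a)).prod)
        = x ^ (m - n) * ((x ^ 2) • (1 : Matrix (Fin n) (Fin n) ℝ) - Aᴴ * A).det := by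
      rw [det_resolvent hAA (x ^ 2), hR]
      rw [Multiset.map_add, Multiset.map_add, Multiset.prod_add, Multiset.prod_add]
      rw [Multiset.map_map, Multiset.map_map]
      rw [Multiset.map_replicate, Multiset.prod_replicate, sub_zero]
      rw [← Finset.prod_eq_multiset_prod, ← Finset.prod_eq_multiset_prod]
      have : (∏ i, ((fun a => x - a) ∘ svals A) i)
          * (∏ i, ((fun a => x - a) ∘ fun i => -svals A i) i)
          = ∏ i, (x ^ 2 - hAA.eigenvalues i) := by
        rw [← Finset.prod_mul_distrib]
        refine Finset.prod_congr rfl fun i _ => ?_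
        simp only [Function.comp_apply, sub_neg_eq_add]
        exact hfact i
      calc (∏ i, ((fun a => x - a) ∘ svals A) i)
            * (x ^ (m - n) * ∏ i, ((fun a => x - a) ∘ fun i => -svals A i) i)
          = x ^ (m - n) * ((∏ i, ((fun a => x - a) ∘ svals A) i)
              * (∏ i, ((fun a => x - a) ∘ fun i => -svals A i) i)) := by ring
        _ = x ^ (m - n) * ∏ i, (x ^ 2 - hAA.eigenvalues i) := by rw [this]
    rw [hLval, hRval, det_dilation hnm A hx']
  · have h5 : ({x : ℝ | x ≠ 0}) = ({0}ᶜ : Set ℝ) := rfl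
    rw [h5]
    exact (Set.finite_singleton 0).infinite_compl

end Dilation

section Main

lemma sorted_eq_sort {m n : ℕ} (X : Matrix (Fin m) (Fin n) ℝ) :
    svalsSorted X = svals X ∘ (Tuple.sort (fun j => -svals X j)) := rfl

theorem main_le {m n : ℕ} (hnm : n ≤ m) (A B : Matrix (Fin m) (Fin n) ℝ) :
    (Aᵀ * B).trace ≤ ∑ i, svalsSorted A i * svalsSorted B i := by
  have hCA := dilation_isHermitian A
  have hCB := dilation_isHermitian B
  set CA := Matrix.reindex finSumFinEquiv finSumFinEquiv (Matrix.fromBlocks 0 A Aᵀ 0) with hCAdef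
  set CB := Matrix.reindex finSumFinEquiv finSumFinEquiv (Matrix.fromBlocks 0 B Bᵀ 0) with hCBdef
  have htr : (CA * CB).trace = 2 * (Aᵀ * B).trace := by
    rw [hCAdef, hCBdef, Matrix.reindex_apply, Matrix.reindex_apply, Matrix.submatrix_mul_equiv]
    have h1 : ∀ (M : Matrix (Fin m ⊕ Fin n) (Fin m ⊕ Fin n) ℝ),
        (M.submatrix finSumFinEquiv.symm finSumFinEquiv.symm).trace = M.trace := by
      intro M
      rw [Matrix.trace, Matrix.trace]
      simp only [Matrix.diag_apply, Matrix.submatrix_apply]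
      exact Equiv.sum_comp finSumFinEquiv.symm (fun i => M i i)
    rw [h1, Matrix.fromBlocks_multiply]
    have h2 : ∀ (P : Matrix (Fin m) (Fin m) ℝ) (Q : Matrix (Fin m) (Fin n) ℝ)
        (R : Matrix (Fin n) (Fin m) ℝ) (S : Matrix (Fin n) (Fin n) ℝ),
        (Matrix.fromBlocks P Q R S).trace = P.trace + S.trace := by
      intro P Q R S
      rw [Matrix.trace, Matrix.trace, Matrix.trace, Fintype.sum_sum_type]
      simp [Matrix.fromBlocks]
    rw [h2]
    simp only [Matrix.zero_mul, Matrix.mul_zero, add_zero, zero_add]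
    have h3 : (A * Bᵀ).trace = (Aᵀ * B).trace := by
      rw [← Matrix.trace_transpose (A * Bᵀ), Matrix.transpose_mul,
        Matrix.transpose_transpose, Matrix.trace_mul_comm]
    rw [h3]
    ring
  set sA := svalsSorted A with hsAdef
  set sB := svalsSorted B with hsBdef
  have hsA_anti : Antitone sA := sort_antitone (svals A)
  have hsB_anti : Antitone sB := sort_antitone (svals B)
  have hsA_nn : ∀ i, 0 ≤ sA i := fun i => Real.sqrt_nonneg _
  have hsB_nn : ∀ i, 0 ≤ sB i := fun i => Real.sqrt_nonneg _
  set πA := Tuple.sort (fun i => -hCA.eigenvalues i) with hπA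
  set πB := Tuple.sort (fun i => -hCB.eigenvalues i) with hπB
  have hA_anti : Antitone (hCA.eigenvalues ∘ πA) := sort_antitone hCA.eigenvalues
  have hB_anti : Antitone (hCB.eigenvalues ∘ πB) := sort_antitone hCB.eigenvalues
  have hgA : hCA.eigenvalues ∘ πA = gfun m n sA := by
    apply antitone_unique hA_anti (gfun_antitone m n hnm hsA_anti hsA_nn)
    calc Multiset.map (hCA.eigenvalues ∘ πA) Finset.univ.val
        = Multiset.map hCA.eigenvalues Finset.univ.val := multiset_map_univ_equiv πA _
      _ = Multiset.map (svals A) Finset.univ.val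
          + (Multiset.replicate (m - n) (0 : ℝ)
            + Multiset.map (fun i => -svals A i) Finset.univ.val) := eig_dilation hnm A
      _ = Multiset.map sA Finset.univ.val
          + (Multiset.replicate (m - n) (0 : ℝ)
            + Multiset.map (fun i => -sA i) Finset.univ.val) := by
          congr 1
          · exact (multiset_map_univ_equiv (Tuple.sort (fun j => -svals A j)) (svals A)).symm
          · congr 1
            exact (multiset_map_univ_equiv (Tuple.sort (fun j => -svals A j))
              (fun i => -svals A i)).symm
      _ = Multiset.map (gfun m n sA) Finset.univ.val := (gfun_multiset m n hnm sA).symm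
  have hgB : hCB.eigenvalues ∘ πB = gfun m n sB := by
    apply antitone_unique hB_anti (gfun_antitone m n hnm hsB_anti hsB_nn)
    calc Multiset.map (hCB.eigenvalues ∘ πB) Finset.univ.val
        = Multiset.map hCB.eigenvalues Finset.univ.val := multiset_map_univ_equiv πB _
      _ = Multiset.map (svals B) Finset.univ.val
          + (Multiset.replicate (m - n) (0 : ℝ)
            + Multiset.map (fun i => -svals B i) Finset.univ.val) := eig_dilation hnm B
      _ = Multiset.map sB Finset.univ.val
          + (Multiset.replicate (m - n) (0 : ℝ)
            + Multiset.map (fun i => -sB i) Finset.univ.val) := by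
          congr 1
          · exact (multiset_map_univ_equiv (Tuple.sort (fun j => -svals B j)) (svals B)).symm
          · congr 1
            exact (multiset_map_univ_equiv (Tuple.sort (fun j => -svals B j))
              (fun i => -svals B i)).symm
      _ = Multiset.map (gfun m n sB) Finset.univ.val := (gfun_multiset m n hnm sB).symm
  have hineq := symVN hCA hCB πA πB hA_anti hB_anti
  have hsum : ∑ i, hCA.eigenvalues (πA i) * hCB.eigenvalues (πB i)
      = 2 * ∑ i, sA i * sB i := by
    have e1 : ∀ i, hCA.eigenvalues (πA i) = gfun m n sA i := fun i => congrFun hgA i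
    have e2 : ∀ i, hCB.eigenvalues (πB i) = gfun m n sB i := fun i => congrFun hgB i
    rw [Finset.sum_congr rfl (fun i _ => by rw [e1 i, e2 i])]
    exact gfun_sum m n hnm sA sB
  rw [htr, hsum] at hineq
  linarith

end Main

section Pad

def padM {m n : ℕ} (X : Matrix (Fin m) (Fin n) ℝ) : Matrix (Fin (m + n)) (Fin n) ℝ :=
  Matrix.of fun i j => if h : (i : ℕ) < m then X ⟨i, h⟩ j else 0

lemma pad_mul {m n : ℕ} (X Y : Matrix (Fin m) (Fin n) ℝ) :
    (padM X)ᵀ * padM Y = Xᵀ * Y := by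
  ext k l
  rw [Matrix.mul_apply, Matrix.mul_apply]
  simp only [Matrix.transpose_apply, padM, Matrix.of_apply]
  have hterm : ∀ i : Fin (m + n),
      (if h : (i : ℕ) < m then X ⟨i, h⟩ k else 0) * (if h : (i : ℕ) < m then Y ⟨i, h⟩ l else 0)
        = (fun q : ℕ => if h : q < m then X ⟨q, h⟩ k * Y ⟨q, h⟩ l else 0) (i : ℕ) := by
    intro i
    by_cases h : (i : ℕ) < m
    · simp [h]
    · simp [h]
  rw [Finset.sum_congr rfl (fun i _ => hterm i)]
  rw [Fin.sum_univ_eq_sum_range (fun q => if h : q < m then X ⟨q, h⟩ k * Y ⟨q, h⟩ l else 0) (m + n)]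
  rw [← Finset.sum_subset (Finset.range_subset_range.mpr (Nat.le_add_right m n))
    (fun x _ hx => by rw [dif_neg (by simpa using hx)])]
  rw [← Fin.sum_univ_eq_sum_range (fun q => if h : q < m then X ⟨q, h⟩ k * Y ⟨q, h⟩ l else 0) m]
  refine Finset.sum_congr rfl fun i _ => ?_
  rw [dif_pos i.isLt]

lemma svals_pad {m n : ℕ} (X : Matrix (Fin m) (Fin n) ℝ) : svals (padM X) = svals X := by
  have heq : (padM X)ᴴ * padM X = Xᴴ * X := by
    rw [real_conjT, real_conjT, pad_mul]
  have h := eig_congr (by simpa using Matrix.isHermitian_conjTranspose_mul_self (padM X) :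
    ((padM X)ᵀ * padM X).IsHermitian)
    (by simpa using Matrix.isHermitian_conjTranspose_mul_self X : (Xᵀ * X).IsHermitian) (pad_mul X X)
  funext i
  unfold svals
  rw [h]

lemma svalsSorted_pad {m n : ℕ} (X : Matrix (Fin m) (Fin n) ℝ) :
    svalsSorted (padM X) = svalsSorted X := by
  unfold svalsSorted
  rw [svals_pad]

end Pad

/-- Von Neumann's trace inequality:
`trace (Aᵀ B) ≤ Σ_i σ_i(A) σ_i(B)`, the singular values being in nonincreasing order. -/
theorem vonNeumann_trace_inequality {m n : ℕ} (A B : Matrix (Fin m) (Fin n) ℝ) :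
    (Aᵀ * B).trace ≤ ∑ i, svalsSorted A i * svalsSorted B i := by
  rcases le_or_gt n m with h | h
  · exact main_le h A B
  · have h' : n ≤ m + n := Nat.le_add_left n m
    have hmain := main_le h' (padM A) (padM B)
    rw [pad_mul, svalsSorted_pad, svalsSorted_pad] at hmain
    exact hmain
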